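/- Suppose that for a fixed n and for every 0 ≤ s ≤ S (where S < n), the Lex diagram of size C(n+1,2) − s minimizes the number of maximal NE-paths among all shifted Ferrers diagrams of that size on n columns. Then for every 0 ≤ s ≤ S, the Lex diagram of size C(n+2,2) − s minimizes the number of maximal NE-paths among all shifted Ferrers diagrams of that size on n+1 columns. -/

import Mathlib

/-- A single north (row decreases by 1) or east (column increases by 1) step. -/
def NEStep (p q : ℕ × ℕ) : Prop :=
  (q.1 + 1 = p.1 ∧ q.2 = p.2) ∨ (q.1 = p.1 ∧ q.2 = p.2 + 1)

/-- `l` is an NE-lattice path from `s` to `t` all of whose boxes lie in the diagram `D`. -/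
def IsNEPathIn (D : Set (ℕ × ℕ)) (s t : ℕ × ℕ) (l : List (ℕ × ℕ)) : Prop :=
  l.Chain' NEStep ∧ l.head? = some s ∧ l.getLast? = some t ∧ ∀ b ∈ l, b ∈ D

/-- The shifted staircase diagram on `n` columns. -/
def staircase (n : ℕ) : Set (ℕ × ℕ) := {p | 1 ≤ p.1 ∧ p.1 ≤ p.2 ∧ p.2 ≤ n}

/-- The number of maximal NE-paths in the diagram `D` on `n` columns, i.e. NE-paths from
some diagonal box `(i,i)` to the top-right box `(1,n)`, staying inside `D`. -/
noncomputable def numMaxPaths (D : Set (ℕ × ℕ)) (n : ℕ) : ℕ :=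
  Nat.card {l : List (ℕ × ℕ) // ∃ i, IsNEPathIn D (i, i) (1, n) l}

/-- `D` is the diagram of a strongly stable set of quadratic monomials in `n` variables. -/
def StronglyStableIn (n : ℕ) (D : Set (ℕ × ℕ)) : Prop :=
  D ⊆ staircase n ∧
    ∀ a b a' b' : ℕ, (a, b) ∈ D → 1 ≤ a' → a' ≤ a → a' ≤ b' → b' ≤ b → (a', b') ∈ D

/-- The Lex diagram: the `u` lex-greatest boxes of the staircase on `n` columns, where boxes
are ordered first by row and then by column. -/
def lexSeg (n u : ℕ) : Set (ℕ × ℕ) :=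
  {p ∈ staircase n | (∑ c ∈ Finset.Ico 1 p.1, (n + 1 - c)) + (p.2 - p.1) < u}

namespace Stmt14

/-- triangular numbers -/
def T (m : ℕ) : ℕ := ∑ i ∈ Finset.range (m+1), i

lemma T_zero : T 0 = 0 := by simp [T]

lemma T_succ (m : ℕ) : T (m+1) = T m + (m+1) := by
  simp [T, Finset.sum_range_succ]

lemma le_T (m : ℕ) : m ≤ T m := by
  cases m with
  | zero => simp [T_zero]
  | succ k => rw [T_succ]; omega

lemma T_add_le {t m : ℕ} (h : t ≤ m) : T t + (m - t) ≤ T m := by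
  induction m with
  | zero => interval_cases t; simp
  | succ k ih =>
    rcases Nat.lt_or_ge t (k+1) with h1 | h1
    · have := ih (by omega)
      rw [T_succ]; omega
    · have : t = k + 1 := by omega
      subst this; simp

lemma choose_T (n : ℕ) : (n+1).choose 2 = T n := by
  induction n with
  | zero => simp [T_zero]
  | succ k ih =>
    have : (k+2).choose 2 = (k+1).choose 1 + (k+1).choose 2 := Nat.choose_succ_succ _ _
    rw [this, ih, Nat.choose_one_right, T_succ]; omega

/-- partial row sums for lex rank -/
def Srow (n a : ℕ) : ℕ := ∑ c ∈ Finset.Ico 1 a, (n + 1 - c)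

lemma Srow_T {n a : ℕ} (h1 : 1 ≤ a) (h2 : a ≤ n+1) : Srow n a + T (n+1-a) = T n := by
  induction a, h1 using Nat.le_induction with
  | base => simp [Srow]
  | succ a ha ih =>
    have ha' : a ≤ n := by omega
    have h3 : Srow n (a+1) = Srow n a + (n+1-a) := by
      unfold Srow; rw [Finset.sum_Ico_succ_top ha]
    have h4 : T (n+1-a) = T (n-a) + (n+1-a) := by
      have h6 : n+1-a = (n-a)+1 := by omega
      rw [h6, T_succ]
    have := ih (by omega)
    have h5 : n+1-(a+1) = n-a := by omega
    rw [h3, h5]; omega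

lemma Srow_shift {n a : ℕ} (h2 : a ≤ n+1) :
    (∑ c ∈ Finset.Ico 1 a, (n + 2 - c)) = Srow n a + (a - 1) := by
  have : (∑ c ∈ Finset.Ico 1 a, (n + 2 - c)) = ∑ c ∈ Finset.Ico 1 a, ((n + 1 - c) + 1) := by
    apply Finset.sum_congr rfl
    intro c hc
    simp only [Finset.mem_Ico] at hc
    omega
  rw [this, Finset.sum_add_distrib]
  simp [Srow, Nat.card_Ico]

lemma Srow_succ_shift {n a : ℕ} (h1 : 1 ≤ a) :
    (∑ c ∈ Finset.Ico 1 (a+1), (n + 2 - c)) = (n+1) + Srow n a := by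
  obtain ⟨k, rfl⟩ : ∃ k, a = k + 1 := ⟨a - 1, by omega⟩
  rw [Finset.sum_Ico_eq_sum_range]
  unfold Srow
  rw [Finset.sum_Ico_eq_sum_range]
  simp only [Nat.add_sub_cancel]
  rw [Finset.sum_range_succ']
  have e1 : ∀ i, n + 2 - (1 + (i+1)) = n - i := by intro i; omega
  have e2 : ∀ i ∈ Finset.range k, n + 1 - (1 + i) = n - i := by intro i _; omega
  simp only [e1]
  rw [Finset.sum_congr rfl e2]
  have : (∑ x ∈ Finset.range k, (n - x)) = ((Finset.range k).sum (HSub.hSub n)) := rfl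
  omega


/-! ### paths infrastructure -/

def PathsTo (D : Set (ℕ × ℕ)) (m : ℕ) : Set (List (ℕ × ℕ)) :=
  {l | ∃ i, IsNEPathIn D (i, i) (1, m) l}

lemma numMaxPaths_eq (D : Set (ℕ × ℕ)) (m : ℕ) :
    numMaxPaths D m = (PathsTo D m).ncard := rfl

lemma nestep_bounds {p q : ℕ × ℕ} (h : NEStep p q) : p.2 ≤ q.2 ∧ q.1 ≤ p.1 := by
  rcases h with ⟨h1, h2⟩ | ⟨h1, h2⟩ <;> omega

/-- membership-aware chain' map -/
lemma chain'_map_of_mem {α β : Type*} {R : α → α → Prop} {R' : β → β → Prop} {f : α → β}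
    {Q : α → Prop} :
    ∀ {l : List α}, List.Chain' R l → (∀ x ∈ l, Q x) →
      (∀ a b, Q a → Q b → R a b → R' (f a) (f b)) → List.Chain' R' (l.map f)
  | [], _, _, _ => by simp [List.Chain']
  | [a], _, _, _ => by simp [List.Chain']
  | a :: b :: l2, hc, hm, himp => by
    unfold List.Chain' at hc; rw [List.isChain_cons_cons] at hc
    have ih := chain'_map_of_mem (l := b :: l2) hc.2 (fun x hx => hm x (by simp [hx])) himp
    simp only [List.map_cons] at ih ⊢
    unfold List.Chain'; rw [List.isChain_cons_cons]
    exact ⟨himp a b (hm a (by simp)) (hm b (by simp)) hc.1, ih⟩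

lemma coord_bounds :
    ∀ {l : List (ℕ × ℕ)} {t : ℕ × ℕ}, List.Chain' NEStep l → l.getLast? = some t →
      ∀ p ∈ l, p.2 ≤ t.2 ∧ t.1 ≤ p.1
  | [], t, _, hlast, p, hp => by simp at hp
  | [a], t, _, hlast, p, hp => by
    simp at hlast hp; subst hlast; subst hp; omega
  | a :: b :: l2, t, hc, hlast, p, hp => by
    unfold List.Chain' at hc; rw [List.isChain_cons_cons] at hc
    rw [List.getLast?_cons_cons] at hlast
    have ih := coord_bounds (l := b :: l2) hc.2 hlast
    rcases List.mem_cons.1 hp with rfl | hp2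
    · have h1 := nestep_bounds hc.1
      have h2 := ih b (by simp)
      omega
    · exact ih p hp2

lemma staircase_finite (m : ℕ) : (staircase m).Finite := by
  apply Set.Finite.subset (Set.finite_Icc ((1:ℕ),(1:ℕ)) (m,m))
  rintro ⟨a,b⟩ ⟨h1,h2,h3⟩
  simp [Set.mem_Icc, Prod.le_def]
  omega

lemma chain_length_le {m : ℕ} {l : List (ℕ × ℕ)} (hc : List.Chain' NEStep l)
    (hm : ∀ p ∈ l, p ∈ staircase m) : l.length ≤ 2 * m := by
  set μ : ℕ × ℕ → ℕ := fun p => p.2 + (m - p.1) with hμ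
  have hchain : List.Chain' (· < ·) (l.map μ) := by
    apply chain'_map_of_mem hc hm
    intro p q hp hq hstep
    rcases hstep with ⟨h1, h2⟩ | ⟨h1, h2⟩ <;>
      · simp only [hμ]
        obtain ⟨hp1, hp2, hp3⟩ := hp
        obtain ⟨hq1, hq2, hq3⟩ := hq
        omega
  have hpw : List.Pairwise (· < ·) (l.map μ) := List.isChain_iff_pairwise.1 hchain
  have hnd : (l.map μ).Nodup := hpw.imp Nat.ne_of_lt
  have hsub : (l.map μ).toFinset ⊆ Finset.range (2 * m) := by
    intro x hx
    rw [List.mem_toFinset] at hx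
    obtain ⟨p, hp, rfl⟩ := List.mem_map.1 hx
    obtain ⟨h1, h2, h3⟩ := hm p hp
    simp only [hμ, Finset.mem_range]
    omega
  have := Finset.card_le_card hsub
  rw [List.toFinset_card_of_nodup hnd, Finset.card_range, List.length_map] at this
  exact this

lemma paths_finite_aux (m : ℕ) :
    {l : List (ℕ × ℕ) | List.Chain' NEStep l ∧ ∀ p ∈ l, p ∈ staircase m}.Finite := by
  have : Finite ↥(staircase m) := (staircase_finite m).to_subtype
  apply Set.Finite.subset
    (((List.finite_length_le ↥(staircase m) (2*m)).image (List.map Subtype.val)))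
  rintro l ⟨hc, hm⟩
  refine ⟨l.attach.map (fun x => (⟨x.1, hm x.1 x.2⟩ : ↥(staircase m))), ?_, ?_⟩
  · have hlen : (l.attach.map (fun x => (⟨x.1, hm x.1 x.2⟩ : ↥(staircase m)))).length
        = l.length := by simp
    show _ ≤ 2*m
    rw [hlen]
    exact chain_length_le hc hm
  · rw [List.map_map]
    have : (Subtype.val ∘ fun (x : {x // x ∈ l}) => (⟨x.1, hm x.1 x.2⟩ : ↥(staircase m)))
        = fun (x : {x // x ∈ l}) => x.1 := rfl
    rw [this, List.attach_map_subtype_val]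

lemma pathsTo_finite {D : Set (ℕ × ℕ)} {m : ℕ} (hD : D ⊆ staircase m) :
    (PathsTo D m).Finite := by
  apply Set.Finite.subset (paths_finite_aux m)
  rintro l ⟨i, hc, _, _, hmem⟩
  exact ⟨hc, fun p hp => hD (hmem p hp)⟩

lemma numMaxPaths_mono {D E : Set (ℕ × ℕ)} {m : ℕ} (h : D ⊆ E) (hE : E ⊆ staircase m) :
    numMaxPaths D m ≤ numMaxPaths E m := by
  rw [numMaxPaths_eq, numMaxPaths_eq]
  apply Set.ncard_le_ncard _ (pathsTo_finite hE)
  rintro l ⟨i, hc, h1, h2, hmem⟩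
  exact ⟨i, hc, h1, h2, fun p hp => h (hmem p hp)⟩


/-! ### decomposition -/

def colTrunc (n : ℕ) (D : Set (ℕ × ℕ)) : Set (ℕ × ℕ) := {p ∈ D | p.2 ≤ n}

def shiftP (p : ℕ × ℕ) : ℕ × ℕ := (p.1 + 1, p.2 + 1)

def unshP (p : ℕ × ℕ) : ℕ × ℕ := (p.1 - 1, p.2 - 1)

def shiftDown (D : Set (ℕ × ℕ)) : Set (ℕ × ℕ) := {p | 1 ≤ p.1 ∧ shiftP p ∈ D}

lemma shiftP_injective : Function.Injective shiftP := by
  rintro ⟨a,b⟩ ⟨c,d⟩ h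
  simp only [shiftP, Prod.mk.injEq] at h
  exact Prod.ext (by omega) (by omega)

/-- the set of paths obtained from column-truncated paths -/
def SetA (n : ℕ) (D : Set (ℕ × ℕ)) : Set (List (ℕ × ℕ)) :=
  (fun l => l ++ [((1:ℕ), n+1)]) '' PathsTo (colTrunc n D) n

def SetB (n : ℕ) (D : Set (ℕ × ℕ)) : Set (List (ℕ × ℕ)) :=
  (fun l => l.map shiftP ++ [((1:ℕ), n+1)]) '' PathsTo (shiftDown D) n

lemma setA_sub {n : ℕ} {D : Set (ℕ × ℕ)} (hc : (1, n+1) ∈ D) :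
    SetA n D ⊆ PathsTo D (n+1) := by
  rintro _ ⟨l, ⟨i, hch, hhd, hlast, hmem⟩, rfl⟩
  have hne : l ≠ [] := by rintro rfl; simp at hhd
  refine ⟨i, ?_, ?_, ?_, ?_⟩
  · unfold List.Chain'; rw [List.isChain_append]
    refine ⟨hch, by simp, ?_⟩
    intro x hx y hy
    simp only [List.head?_cons, Option.mem_def, Option.some.injEq] at hy
    rw [hlast] at hx
    simp only [Option.mem_def, Option.some.injEq] at hx
    subst hx; subst hy
    right; exact ⟨rfl, rfl⟩
  · rw [List.head?_append_of_ne_nil _ hne]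
    exact hhd
  · simp
  · intro b hb
    rcases List.mem_append.1 hb with h | h
    · exact (hmem b h).1
    · simp at h; subst h; exact hc

lemma setB_sub {n : ℕ} {D : Set (ℕ × ℕ)} (hc : (1, n+1) ∈ D) :
    SetB n D ⊆ PathsTo D (n+1) := by
  rintro _ ⟨l, ⟨i, hch, hhd, hlast, hmem⟩, rfl⟩
  have hne : l ≠ [] := by rintro rfl; simp at hhd
  have hne2 : l.map shiftP ≠ [] := by simpa using hne
  refine ⟨i + 1, ?_, ?_, ?_, ?_⟩
  · unfold List.Chain'; rw [List.isChain_append]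
    refine ⟨?_, by simp, ?_⟩
    · apply chain'_map_of_mem hch (fun x _ => trivial)
      rintro a b _ _ (⟨h1, h2⟩ | ⟨h1, h2⟩)
      · left; simp only [shiftP]; omega
      · right; simp only [shiftP]; omega
    · intro x hx y hy
      simp only [List.head?_cons, Option.mem_def, Option.some.injEq] at hy
      rw [List.getLast?_map, hlast] at hx
      simp only [Option.mem_def, Option.map_some, Option.some.injEq] at hx
      subst hx; subst hy
      left; exact ⟨rfl, rfl⟩
  · rw [List.head?_append_of_ne_nil _ hne2, List.head?_map, hhd]
    rfl
  · simp
  · intro b hb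
    rcases List.mem_append.1 hb with h | h
    · obtain ⟨p, hp, rfl⟩ := List.mem_map.1 h
      exact (hmem p hp).2
    · simp at h; subst h; exact hc

lemma split_upper {n : ℕ} {D : Set (ℕ × ℕ)} (hn : 1 ≤ n) (hD : D ⊆ staircase (n+1)) :
    PathsTo D (n+1) ⊆ SetA n D ∪ SetB n D := by
  rintro m ⟨i, hch, hhd, hlast, hmem⟩
  have hne : m ≠ [] := by rintro rfl; simp at hhd
  have hlen2 : 2 ≤ m.length := by
    rcases m with _ | ⟨a, _ | ⟨b, m2⟩⟩
    · simp at hhd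
    · exfalso
      simp at hhd hlast
      rw [hhd] at hlast
      have h1 := congrArg Prod.fst hlast
      have h2 := congrArg Prod.snd hlast
      simp at h1 h2
      omega
    · simp only [List.length_cons]
      omega
  set l' := m.dropLast with hl'
  have hne' : l' ≠ [] := by
    rw [hl']
    intro h
    have := congrArg List.length h
    rw [List.length_dropLast] at this
    simp at this
    omega
  have hmeq : m = l' ++ [((1:ℕ), n+1)] := by
    have h1 : m.getLast hne = (1, n+1) := by
      have := List.getLast?_eq_getLast hne
      rw [hlast] at this
      exact (Option.some.injEq _ _ ▸ this.symm :)
    conv_lhs => rw [← List.dropLast_concat_getLast hne]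
    rw [h1]
  rw [hmeq] at hch; unfold List.Chain' at hch; rw [List.isChain_append] at hch
  obtain ⟨hch', _, hjun⟩ := hch
  have hqlast : l'.getLast? = some (l'.getLast hne') := List.getLast?_eq_getLast hne'
  set q := l'.getLast hne' with hqdef
  have hqstep : NEStep q (1, n+1) := hjun _ hqlast _ (by simp)
  have hhd' : l'.head? = some (i, i) := by
    rw [hmeq, List.head?_append_of_ne_nil _ hne'] at hhd
    exact hhd
  have hmem' : ∀ p ∈ l', p ∈ D := by
    intro p hp
    apply hmem
    rw [hmeq]
    exact List.mem_append.2 (Or.inl hp)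
  rcases hqstep with ⟨h1, h2⟩ | ⟨h1, h2⟩
  · -- q = (2, n+1) : shift-down case
    have hq2 : q = (2, n+1) := Prod.ext (by omega) (by omega)
    rw [hq2] at hqlast
    right
    have hrows : ∀ p ∈ l', 2 ≤ p.1 ∧ 1 ≤ p.2 := by
      intro p hp
      have := coord_bounds hch' hqlast p hp
      have := (hD (hmem' p hp)).1
      have := (hD (hmem' p hp)).2.1
      dsimp only at *
      omega
    refine ⟨l'.map unshP, ⟨i - 1, ?_, ?_, ?_, ?_⟩, ?_⟩
    · apply chain'_map_of_mem hch' hrows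
      rintro a b ⟨ha1, ha2⟩ ⟨hb1, hb2⟩ (⟨h3, h4⟩ | ⟨h3, h4⟩)
      · left; simp only [unshP]; omega
      · right; simp only [unshP]; omega
    · rw [List.head?_map, hhd']
      rfl
    · rw [List.getLast?_map, hqlast]
      rfl
    · intro b hb
      obtain ⟨p, hp, rfl⟩ := List.mem_map.1 hb
      obtain ⟨hp1, hp2⟩ := hrows p hp
      refine ⟨by simp [unshP]; omega, ?_⟩
      have : shiftP (unshP p) = p := by
        simp only [shiftP, unshP]
        exact Prod.ext (by omega) (by omega)
      rw [this]
      exact hmem' p hp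
    · show List.map shiftP (List.map unshP l') ++ [((1:ℕ), n+1)] = m
      rw [hmeq]
      congr 1
      rw [List.map_map]
      have : ∀ x ∈ l', (shiftP ∘ unshP) x = x := by
        intro x hx
        obtain ⟨h1, h2⟩ := hrows x hx
        simp only [Function.comp, shiftP, unshP]
        exact Prod.ext (by omega) (by omega)
      rw [List.map_congr_left this]
      simp
  · -- q = (1, n) : truncation case
    have hq2 : q = (1, n) := Prod.ext (by omega) (by omega)
    rw [hq2] at hqlast
    left
    refine ⟨l', ⟨i, hch', hhd', hqlast, ?_⟩, hmeq.symm⟩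
    intro p hp
    refine ⟨hmem' p hp, ?_⟩
    exact (coord_bounds hch' hqlast p hp).1


lemma colTrunc_sub {n : ℕ} {D : Set (ℕ × ℕ)} (hD : D ⊆ staircase (n+1)) :
    colTrunc n D ⊆ staircase n := by
  rintro p ⟨hp, hle⟩
  obtain ⟨h1, h2, h3⟩ := hD hp
  exact ⟨h1, h2, hle⟩

lemma shiftDown_sub {n : ℕ} {D : Set (ℕ × ℕ)} (hD : D ⊆ staircase (n+1)) :
    shiftDown D ⊆ staircase n := by
  rintro p ⟨hp, hs⟩
  obtain ⟨h1, h2, h3⟩ := hD hs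
  simp only [shiftP] at h2 h3
  exact ⟨hp, by omega, by omega⟩

lemma ncard_setA (n : ℕ) (D : Set (ℕ × ℕ)) :
    (SetA n D).ncard = (PathsTo (colTrunc n D) n).ncard := by
  apply Set.ncard_image_of_injective
  intro l1 l2 h
  have := congrArg List.dropLast h
  simpa [List.dropLast_concat] using this

lemma ncard_setB (n : ℕ) (D : Set (ℕ × ℕ)) :
    (SetB n D).ncard = (PathsTo (shiftDown D) n).ncard := by
  apply Set.ncard_image_of_injective
  intro l1 l2 h
  have h2 := congrArg List.dropLast h
  simp only [List.dropLast_concat] at h2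
  exact (List.map_injective_iff.2 shiftP_injective) h2

lemma disjAB (n : ℕ) (D : Set (ℕ × ℕ)) : Disjoint (SetA n D) (SetB n D) := by
  rw [Set.disjoint_left]
  rintro m ⟨l1, ⟨i1, h1a, h1b, hlast1, h1d⟩, rfl⟩ ⟨l2, ⟨i2, h2a, h2b, hlast2, h2d⟩, heq⟩
  have hd := congrArg List.dropLast heq
  simp only [List.dropLast_concat] at hd
  rw [← hd, List.getLast?_map, hlast2] at hlast1
  simp [shiftP] at hlast1

lemma setA_finite {n : ℕ} {D : Set (ℕ × ℕ)} (hD : D ⊆ staircase (n+1)) :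
    (SetA n D).Finite :=
  (pathsTo_finite (colTrunc_sub hD)).image _

lemma setB_finite {n : ℕ} {D : Set (ℕ × ℕ)} (hD : D ⊆ staircase (n+1)) :
    (SetB n D).Finite :=
  (pathsTo_finite (shiftDown_sub hD)).image _

lemma split_lower {n : ℕ} {D : Set (ℕ × ℕ)} (hD : D ⊆ staircase (n+1))
    (hc : (1, n+1) ∈ D) :
    numMaxPaths (colTrunc n D) n + numMaxPaths (shiftDown D) n ≤ numMaxPaths D (n+1) := by
  rw [numMaxPaths_eq, numMaxPaths_eq, numMaxPaths_eq]
  rw [← ncard_setA n D, ← ncard_setB n D]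
  rw [← Set.ncard_union_eq (disjAB n D) (setA_finite hD) (setB_finite hD)]
  exact Set.ncard_le_ncard (Set.union_subset (setA_sub hc) (setB_sub hc)) (pathsTo_finite hD)

lemma split_upper_card {n : ℕ} {D : Set (ℕ × ℕ)} (hn : 1 ≤ n) (hD : D ⊆ staircase (n+1)) :
    numMaxPaths D (n+1) ≤ numMaxPaths (colTrunc n D) n + numMaxPaths (shiftDown D) n := by
  rw [numMaxPaths_eq, numMaxPaths_eq, numMaxPaths_eq]
  rw [← ncard_setA n D, ← ncard_setB n D]
  calc (PathsTo D (n+1)).ncard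
      ≤ (SetA n D ∪ SetB n D).ncard :=
        Set.ncard_le_ncard (split_upper hn hD) ((setA_finite hD).union (setB_finite hD))
    _ ≤ (SetA n D).ncard + (SetB n D).ncard := Set.ncard_union_le _ _

/-! ### cardinalities -/

lemma ncard_staircase (m : ℕ) : (staircase m).ncard = T m := by
  induction m with
  | zero =>
    have : staircase 0 = ∅ := by
      ext p; simp [staircase]; omega
    simp [this, T_zero]
  | succ k ih =>
    have hdecomp : staircase (k+1) = staircase k ∪ (fun c => (c, k+1)) '' Set.Icc 1 (k+1) := by
      ext ⟨a, b⟩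
      simp only [staircase, Set.mem_union, Set.mem_image, Set.mem_Icc, Set.mem_setOf_eq]
      constructor
      · rintro ⟨h1, h2, h3⟩
        rcases Nat.lt_or_ge b (k+1) with h | h
        · left; exact ⟨h1, h2, by omega⟩
        · right; exact ⟨a, ⟨h1, by omega⟩, by simp; omega⟩
      · rintro (⟨h1, h2, h3⟩ | ⟨c, ⟨hc1, hc2⟩, heq⟩)
        · exact ⟨h1, h2, by omega⟩
        · have e1 : c = a := congrArg Prod.fst heq
          have e2 : k+1 = b := congrArg Prod.snd heq
          omega
    have hinj : Function.Injective (fun c => ((c : ℕ), k+1)) := by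
      intro x y h
      exact congrArg Prod.fst h
    have hIcc : ((fun c => ((c:ℕ), k+1)) '' Set.Icc 1 (k+1)).ncard = k + 1 := by
      rw [Set.ncard_image_of_injective _ hinj, ← Finset.coe_Icc, Set.ncard_coe_finset,
        Nat.card_Icc]
      omega
    have hdisj : Disjoint (staircase k) ((fun c => ((c:ℕ), k+1)) '' Set.Icc 1 (k+1)) := by
      rw [Set.disjoint_left]
      rintro ⟨a,b⟩ ⟨h1, h2, h3⟩ ⟨c, hc, heq⟩
      have e2 : k+1 = b := congrArg Prod.snd heq
      omega
    rw [hdecomp, Set.ncard_union_eq hdisj (staircase_finite k)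
      ((Set.finite_Icc 1 (k+1)).image _), ih, hIcc, T_succ]


/-! ### lex side -/

lemma lexSeg_sub (n u : ℕ) : lexSeg n u ⊆ staircase n := fun _ hp => hp.1

lemma lexSeg_mono {n u u' : ℕ} (h : u ≤ u') : lexSeg n u ⊆ lexSeg n u' :=
  fun p hp => ⟨hp.1, lt_of_lt_of_le hp.2 h⟩

lemma lex_shiftDown {n s : ℕ} (hs : s ≤ n) :
    shiftDown (lexSeg (n+1) (T (n+1) - s)) ⊆ lexSeg n (T n - s) := by
  rintro ⟨a, b⟩ ⟨ha, ⟨⟨h1, h2, h3⟩, hrk⟩⟩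
  simp only [shiftP] at h1 h2 h3 hrk
  have ha' : 1 ≤ a := ha
  have hsum : (∑ c ∈ Finset.Ico 1 (a+1), (n + 1 + 1 - c)) = (n+1) + Srow n a := by
    have h := Srow_succ_shift (n := n) ha'
    convert h using 2
  rw [hsum] at hrk
  have hT1 := T_succ n
  have hTn := le_T n
  refine ⟨⟨ha', by omega, by omega⟩, ?_⟩
  show Srow n a + (b - a) < T n - s
  have he : (a + 1 + 1 - 1 : ℕ) = a + 1 := by omega
  have hba : b + 1 - (a + 1) = b - a := by omega
  rw [hba] at hrk
  omega

lemma lex_colTrunc {n s t : ℕ} (hs : s ≤ n) (hts : t ≤ s) (hT : s ≤ T t) :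
    colTrunc n (lexSeg (n+1) (T (n+1) - s)) ⊆ lexSeg n (T n - (s - t)) := by
  rintro ⟨a, b⟩ ⟨⟨⟨h1, h2, h3⟩, hrk⟩, hb⟩
  simp only at h1 h2 h3 hrk hb
  have han : a ≤ n := le_trans h2 hb
  have hsum : (∑ c ∈ Finset.Ico 1 a, (n + 1 + 1 - c)) = Srow n a + (a - 1) := by
    have h := Srow_shift (n := n) (a := a) (by omega)
    convert h using 2
  rw [hsum] at hrk
  have hT1 := T_succ n
  have hTn := le_T n
  refine ⟨⟨h1, h2, hb⟩, ?_⟩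
  show Srow n a + (b - a) < T n - (s - t)
  by_cases hat : a + t ≤ n + 1
  · have hT2 := T_add_le (t := t) (m := n + 1 - a) (by omega)
    have hT3 := Srow_T (n := n) (a := a) h1 (by omega)
    omega
  · omega

/-! ### stability of the pieces -/

lemma colTrunc_stable {n : ℕ} {D : Set (ℕ × ℕ)} (hD : StronglyStableIn (n+1) D) :
    StronglyStableIn n (colTrunc n D) := by
  refine ⟨colTrunc_sub hD.1, ?_⟩
  intro a b a' b' hab h1 h2 h3 h4
  exact ⟨hD.2 a b a' b' hab.1 h1 h2 h3 h4, le_trans h4 hab.2⟩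

lemma shiftDown_stable {n : ℕ} {D : Set (ℕ × ℕ)} (hD : StronglyStableIn (n+1) D) :
    StronglyStableIn n (shiftDown D) := by
  refine ⟨shiftDown_sub hD.1, ?_⟩
  intro a b a' b' hab h1 h2 h3 h4
  refine ⟨h1, ?_⟩
  show (a' + 1, b' + 1) ∈ D
  exact hD.2 (a+1) (b+1) (a'+1) (b'+1) hab.2 (by omega) (by omega) (by omega) (by omega)

end Stmt14

open Stmt14

/-- If for every `0 ≤ s ≤ S` (with `S < n`) the Lex diagram of size `C(n+1,2) - s` minimizes
the number of maximal NE-paths among all strongly stable diagrams of that size on `n`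
columns, then for every `0 ≤ s ≤ S` the Lex diagram of size `C(n+2,2) - s` minimizes it
among all strongly stable diagrams of that size on `n+1` columns. -/
theorem stmt_14 (n S : ℕ) (hn : 1 ≤ n) (hS : S < n)
    (H : ∀ s ≤ S, ∀ D : Set (ℕ × ℕ), StronglyStableIn n D →
      D.ncard = Nat.choose (n + 1) 2 - s →
      numMaxPaths (lexSeg n (Nat.choose (n + 1) 2 - s)) n ≤ numMaxPaths D n) :
    ∀ s ≤ S, ∀ D : Set (ℕ × ℕ), StronglyStableIn (n + 1) D →
      D.ncard = Nat.choose (n + 2) 2 - s →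
      numMaxPaths (lexSeg (n + 1) (Nat.choose (n + 2) 2 - s)) (n + 1)
        ≤ numMaxPaths D (n + 1) := by
  intro s hs D hD hcard
  obtain ⟨hDst, hstab⟩ := hD
  have hC1 : (n+1).choose 2 = T n := choose_T n
  have hC2 : (n+2).choose 2 = T (n+1) := choose_T (n+1)
  have hsn : s ≤ n := by omega
  have hTn : n ≤ T n := le_T n
  have hTsucc : T (n+1) = T n + (n+1) := T_succ n
  have hDfin : D.Finite := (staircase_finite (n+1)).subset hDst
  have hcardT : D.ncard = T (n+1) - s := by rw [hcard, hC2]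
  -- the column n+1 part of D
  have hDCfin : ({p ∈ D | p.2 = n+1}).Finite := hDfin.subset (fun p hp => hp.1)
  have hinjc : Function.Injective (fun c => ((c:ℕ), n+1)) := fun x y h => congrArg Prod.fst h
  have hIccCard : ∀ m : ℕ, ((fun c => ((c:ℕ), n+1)) '' Set.Icc 1 m).ncard = m := by
    intro m
    rw [Set.ncard_image_of_injective _ hinjc, ← Finset.coe_Icc, Set.ncard_coe_finset,
      Nat.card_Icc]
    omega
  have hk : ({p ∈ D | p.2 = n+1}).ncard ≤ n + 1 := by
    have hsub : {p ∈ D | p.2 = n+1} ⊆ (fun c => ((c:ℕ), n+1)) '' Set.Icc 1 (n+1) := by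
      rintro ⟨a, b⟩ ⟨hp, he⟩
      obtain ⟨h1, h2, h3⟩ := hDst hp
      simp only at he h1 h2 h3
      exact ⟨a, ⟨h1, by omega⟩, by rw [he]⟩
    have := Set.ncard_le_ncard hsub ((Set.finite_Icc 1 (n+1)).image _)
    rw [hIccCard] at this
    exact this
  set k := ({p ∈ D | p.2 = n+1}).ncard with hkdef
  -- any missing box is in a low row
  have hforce : ∀ p : ℕ × ℕ, p ∈ staircase (n+1) → p ∉ D → k + 1 ≤ p.1 := by
    rintro ⟨p1, p2⟩ hpst hpD
    obtain ⟨hq1, hq2, hq3⟩ := hpst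
    simp only at hq1 hq2 hq3
    have hsub2 : {p ∈ D | p.2 = n+1} ⊆ (fun c => ((c:ℕ), n+1)) '' Set.Icc 1 (p1 - 1) := by
      rintro ⟨a, b⟩ ⟨hq, he⟩
      simp only at he
      have ha1 : 1 ≤ a := (hDst hq).1
      have hlt : a < p1 := by
        by_contra hge
        exact hpD (hstab a b p1 p2 hq hq1 (by omega) hq2
          (by omega))
      exact ⟨a, ⟨ha1, by omega⟩, by rw [he]⟩
    have := Set.ncard_le_ncard hsub2 ((Set.finite_Icc 1 (p1-1)).image _)
    rw [hIccCard] at this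
    simp only [← hkdef] at this
    omega
  -- size of the complement
  have hstcard : (staircase (n+1)).ncard = T (n+1) := ncard_staircase (n+1)
  have hTs : s ≤ T (n+1) := by omega
  have hM : (staircase (n+1) \ D).ncard = s := by
    rw [Set.ncard_diff hDst hDfin, hstcard, hcardT]
    omega
  -- the tail bound : s ≤ T (n+1-k)
  have hinj2 : Function.Injective (fun p : ℕ × ℕ => (p.1 + k, p.2 + k)) := by
    rintro ⟨a, b⟩ ⟨c, d⟩ h
    have h1 := congrArg Prod.fst h
    have h2 := congrArg Prod.snd h
    simp only at h1 h2
    exact Prod.ext (by omega) (by omega)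
  have htailimg : {p ∈ staircase (n+1) | k+1 ≤ p.1}
      = (fun p : ℕ × ℕ => (p.1 + k, p.2 + k)) '' staircase (n+1-k) := by
    ext ⟨a, b⟩
    simp only [Set.mem_image, Set.mem_setOf_eq, staircase]
    constructor
    · rintro ⟨⟨h1, h2, h3⟩, h4⟩
      exact ⟨(a - k, b - k), ⟨by omega, by omega, by omega⟩, Prod.ext (by omega)
        (by omega)⟩
    · rintro ⟨⟨c, d⟩, ⟨h1, h2, h3⟩, heq⟩
      have e1 := congrArg Prod.fst heq
      have e2 := congrArg Prod.snd heq
      constructor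
      · exact ⟨by omega, by omega, by omega⟩
      · omega
  have htailcard : ({p ∈ staircase (n+1) | k+1 ≤ p.1}).ncard = T (n+1-k) := by
    rw [htailimg, Set.ncard_image_of_injective _ hinj2, ncard_staircase]
  have hsT : s ≤ T (n+1-k) := by
    rw [← hM, ← htailcard]
    apply Set.ncard_le_ncard
    · rintro p ⟨hp1, hp2⟩
      exact ⟨hp1, hforce p hp1 hp2⟩
    · rw [htailimg]
      exact (staircase_finite (n+1-k)).image _
  -- minimal t with s ≤ T t
  have hex : ∃ t, s ≤ T t := ⟨s, le_T s⟩
  have ht : s ≤ T (Nat.find hex) := Nat.find_spec hex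
  have htle : Nat.find hex ≤ n + 1 - k := Nat.find_min' hex hsT
  have hts : Nat.find hex ≤ s := Nat.find_min' hex (le_T s)
  set t := Nat.find hex with htdef
  -- the corner box is in D
  have hcorner : (1, n+1) ∈ D := by
    by_contra hno
    have hk0 := hforce (1, n+1) ⟨le_refl 1, by omega, le_refl (n+1)⟩ hno
    have hDsub : D ⊆ staircase n := by
      rintro ⟨a, b⟩ hp
      obtain ⟨h1, h2, h3⟩ := hDst hp
      simp only at h1 h2 h3
      refine ⟨h1, h2, ?_⟩
      simp only
      rcases Nat.lt_or_ge b (n+1) with h | h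
      · omega
      · exfalso
        have hmem : ((a, b) : ℕ × ℕ) ∈ {p ∈ D | p.2 = n+1} := ⟨hp, by omega⟩
        have : ({p ∈ D | p.2 = n+1}).ncard = 0 := by omega
        rw [Set.ncard_eq_zero hDCfin] at this
        rw [this] at hmem
        exact hmem
    have := Set.ncard_le_ncard hDsub (staircase_finite n)
    rw [hcardT, ncard_staircase] at this
    omega
  -- the first row is full
  have hrow1 : ∀ b, 1 ≤ b → b ≤ n+1 → ((1:ℕ), b) ∈ D := by
    intro b h1 h2
    exact hstab 1 (n+1) 1 b hcorner (le_refl 1) (le_refl 1) h1 h2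
  -- cardinality of colTrunc D
  have hdisj2 : Disjoint (colTrunc n D) {p ∈ D | p.2 = n+1} := by
    rw [Set.disjoint_left]
    rintro p ⟨_, h1⟩ ⟨_, h2⟩
    omega
  have hDdecomp : D = colTrunc n D ∪ {p ∈ D | p.2 = n+1} := by
    ext p
    simp only [colTrunc, Set.mem_union, Set.mem_setOf_eq]
    constructor
    · intro hp
      have h3 := (hDst hp).2.2
      rcases Nat.lt_or_ge p.2 (n+1) with h | h
      · exact Or.inl ⟨hp, by omega⟩
      · exact Or.inr ⟨hp, by omega⟩
    · rintro (⟨hp, _⟩ | ⟨hp, _⟩) <;> exact hp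
  have hm1k : (colTrunc n D).ncard + k = T (n+1) - s := by
    rw [← Set.ncard_union_eq hdisj2 (hDfin.subset (fun p hp => hp.1)) hDCfin, ← hDdecomp,
      hcardT]
  have hm1le : (colTrunc n D).ncard ≤ T n := by
    have := Set.ncard_le_ncard (colTrunc_sub hDst) (staircase_finite n)
    rwa [ncard_staircase] at this
  set m1 := (colTrunc n D).ncard with hm1def
  -- cardinality of shiftDown D
  have hsdcard : (shiftDown D).ncard = T n - s := by
    have himg : shiftP '' shiftDown D = {p ∈ D | 2 ≤ p.1} := by
      ext ⟨a, b⟩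
      simp only [Set.mem_image, Set.mem_setOf_eq, shiftDown, shiftP]
      constructor
      · rintro ⟨⟨c, d⟩, ⟨h1, h2⟩, heq⟩
        have e1 : c + 1 = a := congrArg Prod.fst heq
        have e2 : d + 1 = b := congrArg Prod.snd heq
        constructor
        · have he3 : ((c + 1 : ℕ), (d + 1 : ℕ)) = (a, b) := Prod.ext e1 e2
          rw [← he3]
          exact h2
        · omega
      · rintro ⟨hp, h2⟩
        have hb1 : 1 ≤ b := by
          have u1 : a ≤ b := (hDst hp).2.1
          have u2 : 1 ≤ a := (hDst hp).1
          omega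
        exact ⟨(a - 1, b - 1), ⟨by omega, by
          have e : ((a - 1 + 1 : ℕ), (b - 1 + 1 : ℕ)) = (a, b) := Prod.ext (by omega)
            (by omega)
          rw [e]; exact hp⟩, Prod.ext (by omega) (by omega)⟩
    have hrowset : {p ∈ D | p.1 ≤ 1} = (fun b => ((1:ℕ), b)) '' Set.Icc 1 (n+1) := by
      ext ⟨a, b⟩
      simp only [Set.mem_image, Set.mem_Icc, Set.mem_setOf_eq]
      constructor
      · rintro ⟨hp, h1⟩
        obtain ⟨e1, e2, e3⟩ := hDst hp
        simp only at e1 e2 e3 h1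
        exact ⟨b, ⟨by omega, by omega⟩, Prod.ext (by omega) rfl⟩
      · rintro ⟨c, ⟨h1, h2⟩, heq⟩
        have e1 := congrArg Prod.fst heq
        have e2 := congrArg Prod.snd heq
        simp only at e1 e2
        refine ⟨?_, by omega⟩
        rw [← e1, ← e2]
        exact hrow1 c h1 h2
    have hrowcard : ({p ∈ D | p.1 ≤ 1}).ncard = n + 1 := by
      rw [hrowset, Set.ncard_image_of_injective _ (fun x y h => congrArg Prod.snd h),
        ← Finset.coe_Icc, Set.ncard_coe_finset, Nat.card_Icc]
      omega
    have hdisj3 : Disjoint {p ∈ D | 2 ≤ p.1} {p ∈ D | p.1 ≤ 1} := by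
      rw [Set.disjoint_left]
      rintro p ⟨_, h1⟩ ⟨_, h2⟩
      omega
    have hDdecomp3 : D = {p ∈ D | 2 ≤ p.1} ∪ {p ∈ D | p.1 ≤ 1} := by
      ext p
      simp only [Set.mem_union, Set.mem_setOf_eq]
      constructor
      · intro hp
        rcases Nat.lt_or_ge p.1 2 with h | h
        · exact Or.inr ⟨hp, by omega⟩
        · exact Or.inl ⟨hp, h⟩
      · rintro (⟨hp, _⟩ | ⟨hp, _⟩) <;> exact hp
    have hu := Set.ncard_union_eq hdisj3 (hDfin.subset (fun p hp => hp.1))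
      (hDfin.subset (fun p hp => hp.1))
    rw [← hDdecomp3, hcardT, hrowcard] at hu
    rw [← Set.ncard_image_of_injective (shiftDown D) shiftP_injective, himg]
    omega
  -- apply the hypothesis H
  have hstab1 : StronglyStableIn n (colTrunc n D) := colTrunc_stable ⟨hDst, hstab⟩
  have hstab2 : StronglyStableIn n (shiftDown D) := shiftDown_stable ⟨hDst, hstab⟩
  have hH1 := H (T n - m1) (by omega) (colTrunc n D) hstab1 (by rw [hC1]; omega)
  have hH2 := H s hs (shiftDown D) hstab2 (by rw [hC1, hsdcard])
  have he1 : (n+1).choose 2 - (T n - m1) = m1 := by rw [hC1]; omega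
  rw [he1] at hH1
  rw [hC1] at hH2
  -- lex side
  have hLrw : lexSeg (n+1) ((n+2).choose 2 - s) = lexSeg (n+1) (T (n+1) - s) := by
    rw [hC2]
  have hLst : lexSeg (n+1) ((n+2).choose 2 - s) ⊆ staircase (n+1) := lexSeg_sub _ _
  have hupper := split_upper_card hn hLst
  have hlex1 : shiftDown (lexSeg (n+1) ((n+2).choose 2 - s)) ⊆ lexSeg n (T n - s) := by
    rw [hLrw]
    exact lex_shiftDown hsn
  have hlex2 : colTrunc n (lexSeg (n+1) ((n+2).choose 2 - s)) ⊆ lexSeg n m1 := by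
    rw [hLrw]
    refine (lex_colTrunc hsn hts ht).trans (lexSeg_mono ?_)
    omega
  have c1 : numMaxPaths (shiftDown (lexSeg (n+1) ((n+2).choose 2 - s))) n
      ≤ numMaxPaths (lexSeg n (T n - s)) n :=
    numMaxPaths_mono hlex1 (lexSeg_sub _ _)
  have c2 : numMaxPaths (colTrunc n (lexSeg (n+1) ((n+2).choose 2 - s))) n
      ≤ numMaxPaths (lexSeg n m1) n :=
    numMaxPaths_mono hlex2 (lexSeg_sub _ _)
  calc numMaxPaths (lexSeg (n+1) ((n+2).choose 2 - s)) (n+1)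
      ≤ numMaxPaths (colTrunc n (lexSeg (n+1) ((n+2).choose 2 - s))) n
        + numMaxPaths (shiftDown (lexSeg (n+1) ((n+2).choose 2 - s))) n := hupper
    _ ≤ numMaxPaths (lexSeg n m1) n + numMaxPaths (lexSeg n (T n - s)) n :=
        Nat.add_le_add c2 c1
    _ ≤ numMaxPaths (colTrunc n D) n + numMaxPaths (shiftDown D) n :=
        Nat.add_le_add hH1 hH2
    _ ≤ numMaxPaths D (n+1) := split_lower hDst hcorner
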